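/- If W is an (n,T(n))-weakly Ramsey non-P-point in standard position on ω×ω, then there is a set P ∈ W such that every n-element subset of P realizes an n-type. -/

import Mathlib

open Filter Set

/-- The vertical section of `A ⊆ ω × ω` at `n`. -/
def sec (A : Set (ℕ × ℕ)) (n : ℕ) : Set ℕ := {y | (n, y) ∈ A}

/-- Membership in the forcing poset `𝔓` of subsets of `ω × ω`. -/
def memP (A : Set (ℕ × ℕ)) : Prop :=
  {n | (sec A n).Infinite}.Infinite ∧
  (∀ n, (sec A n).Nonempty → (sec A n).Infinite) ∧
  (∀ m n, m ≠ n → Disjoint (sec A m) (sec A n)) ∧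
  (∀ p ∈ A, (p : ℕ × ℕ).1 < p.2) ∧
  (∀ p ∈ A, ∀ q ∈ A, (p : ℕ × ℕ).1 ≠ (q : ℕ × ℕ).2)

/-- A (nonprincipal) selective ultrafilter on ℕ. -/
def Selective (U : Ultrafilter ℕ) : Prop :=
  (U : Filter ℕ) ≤ Filter.cofinite ∧
  ∀ f : ℕ → ℕ, ∃ A ∈ U, Set.InjOn f A ∨ ∃ c, ∀ x ∈ A, f x = c

/-- Isomorphism of ultrafilters on ℕ via a permutation of ℕ. -/
def UIso (V V' : Ultrafilter ℕ) : Prop :=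
  ∃ f : Equiv.Perm ℕ, ∀ A : Set ℕ, (f : ℕ → ℕ) ⁻¹' A ∈ V ↔ A ∈ V'

/-- A sisnis ultrafilter: a selective-indexed sum of pairwise non-isomorphic
selective ultrafilters. -/
def Sisnis (W : Ultrafilter (ℕ × ℕ)) : Prop :=
  ∃ (U : Ultrafilter ℕ) (V : ℕ → Ultrafilter ℕ),
    Selective U ∧ (∀ n, Selective (V n)) ∧
    (∀ m n, m ≠ n → ¬ UIso (V m) (V n)) ∧
    ∀ A : Set (ℕ × ℕ), A ∈ W ↔ {n | sec A n ∈ V n} ∈ U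

/-- Formal symbols `x₁, …, xₙ` (left) and `y₁, …, yₙ` (right). -/
abbrev Symb (n : ℕ) := Fin n ⊕ Fin n

def symVal {n : ℕ} (a b : Fin n → ℕ) : Symb n → ℕ
  | Sum.inl i => a i
  | Sum.inr i => b i

/-- `τ` is an `n`-type: a linear pre-order of the symbols `x₁,…,xₙ,y₁,…,yₙ` with
`y₁ < ⋯ < yₙ`, each `xᵢ` strictly preceding `yᵢ`, and distinct equivalent symbols both `x`'s. -/
structure IsNType (n : ℕ) (τ : Symb n → Symb n → Prop) : Prop where
  refl : ∀ u, τ u u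
  trans : ∀ u v w, τ u v → τ v w → τ u w
  total : ∀ u v, τ u v ∨ τ v u
  y_lt : ∀ i j : Fin n, i < j → τ (Sum.inr i) (Sum.inr j) ∧ ¬ τ (Sum.inr j) (Sum.inr i)
  x_lt_y : ∀ i : Fin n, τ (Sum.inl i) (Sum.inr i) ∧ ¬ τ (Sum.inr i) (Sum.inl i)
  equiv_xx : ∀ u v, u ≠ v → τ u v → τ v u → (∃ i, u = Sum.inl i) ∧ (∃ j, v = Sum.inl j)

/-- `T n` is the number of `n`-types. -/
noncomputable def T (n : ℕ) : ℕ := Nat.card {τ : Symb n → Symb n → Prop // IsNType n τ}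

/-- An `n`-element subset of `ω × ω` realizes the `n`-type `τ`: listing it as
`{(a₁,b₁),…,(aₙ,bₙ)}` with `b₁ < ⋯ < bₙ`, interpreting `xᵢ` as `aᵢ` and `yᵢ` as `bᵢ`
makes the order and equality relations among the symbols exactly those of `τ`. -/
def Realizes {n : ℕ} (τ : Symb n → Symb n → Prop) (s : Set (ℕ × ℕ)) : Prop :=
  ∃ a b : Fin n → ℕ, StrictMono b ∧ s = Set.range (fun i => (a i, b i)) ∧
    ∀ u v : Symb n, τ u v ↔ symVal a b u ≤ symVal a b v

/-- An ultrafilter is `(n,t)`-weakly Ramsey if for every partition (coloring) of the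
`n`-element subsets into finitely many pieces there is `H` in the ultrafilter such that
the `n`-element subsets of `H` meet at most `t` pieces. -/
def WeaklyRamsey {α : Type} (U : Ultrafilter α) (n t : ℕ) : Prop :=
  ∀ (k : ℕ) (c : Set α → Fin k), ∃ H ∈ U,
    ({i : Fin k | ∃ s : Set α, s ⊆ H ∧ s.Finite ∧ s.ncard = n ∧ c s = i}).ncard ≤ t

/-- A non-P-point in standard position: a nonprincipal ultrafilter on `ω × ω` such that
the first projection is neither finite-to-one nor constant on any set of the ultrafilter. -/
def StdNonPpoint (W : Ultrafilter (ℕ × ℕ)) : Prop :=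
  (W : Filter (ℕ × ℕ)) ≤ Filter.cofinite ∧
  ∀ A ∈ W, (¬ ∀ m : ℕ, {p : ℕ × ℕ | p ∈ A ∧ p.1 = m}.Finite) ∧
    (¬ ∃ c : ℕ, ∀ p ∈ A, (p : ℕ × ℕ).1 = c)

/-- The three-functions property: every function on `ω × ω` is, on some set of the
ultrafilter, constant, or one-to-one, or `π₁` followed by a one-to-one function. -/
def ThreeFunctions (W : Ultrafilter (ℕ × ℕ)) : Prop :=
  ∀ f : ℕ × ℕ → ℕ, ∃ A ∈ W,
    (∃ c, ∀ p ∈ A, f p = c) ∨ Set.InjOn f A ∨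
    (∃ g : ℕ → ℕ, Function.Injective g ∧ ∀ p ∈ A, f p = g (p : ℕ × ℕ).1)

/-- `π₁` is a conservative map on `W` (combinatorial formulation). -/
def ConservativePi1 (W : Ultrafilter (ℕ × ℕ)) : Prop :=
  ∀ R : ℕ → ℕ → ℕ → Prop, ∃ S : ℕ → ℕ → Prop, ∀ f : ℕ → ℕ,
    ({p : ℕ × ℕ | R p.1 p.2 (f p.1)} ∈ W ↔ {x : ℕ | S x (f x)} ∈ W.map Prod.fst)

/-- Formal symbols `x₁, x₂, …` (left) and `y₁, y₂, …` (right). -/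
abbrev OSym := ℕ ⊕ ℕ

def osymVal (a b : ℕ → ℕ) : OSym → ℕ
  | Sum.inl i => a i
  | Sum.inr i => b i

/-- `τ` is an ω-type. -/
structure IsOmegaType (τ : OSym → OSym → Prop) : Prop where
  /-- `τ` is a linear pre-order whose quotient linear order has order type ω. -/
  rank : ∃ r : OSym → ℕ, Function.Surjective r ∧ ∀ u v, τ u v ↔ r u ≤ r v
  y_lt : ∀ i j : ℕ, i < j → τ (Sum.inr i) (Sum.inr j) ∧ ¬ τ (Sum.inr j) (Sum.inr i)
  x_le_y : ∀ i : ℕ, τ (Sum.inl i) (Sum.inr i)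
  /-- no equivalence class contains both an `x` and a `y` -/
  x_not_equiv_y : ∀ i j : ℕ, ¬ (τ (Sum.inl i) (Sum.inr j) ∧ τ (Sum.inr j) (Sum.inl i))
  /-- every class of an `x` contains infinitely many `x`'s -/
  x_class_infinite : ∀ i : ℕ,
    {j : ℕ | τ (Sum.inl i) (Sum.inl j) ∧ τ (Sum.inl j) (Sum.inl i)}.Infinite
  /-- there are infinitely many equivalence classes of `x`'s -/
  x_classes_infinite : ∀ F : Finset ℕ, ∃ i : ℕ, ∀ j ∈ F,
    ¬ (τ (Sum.inl i) (Sum.inl j) ∧ τ (Sum.inl j) (Sum.inl i))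

/-- An element of `𝔓` realizes the ω-type `τ`. -/
def RealizesOmega (τ : OSym → OSym → Prop) (A : Set (ℕ × ℕ)) : Prop :=
  ∃ a b : ℕ → ℕ, StrictMono b ∧ A = Set.range (fun i => (a i, b i)) ∧
    ∀ u v : OSym, τ u v ↔ osymVal a b u ≤ osymVal a b v

/-- `𝔓_τ`: the elements of `𝔓` realizing the ω-type `τ`. -/
def Ptau (τ : OSym → OSym → Prop) : Set (Set (ℕ × ℕ)) :=
  {A | memP A ∧ RealizesOmega τ A}

open Classical in
/-- The identification of `𝒫(ω × ω)` with the product space `2^(ω×ω)`. -/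
noncomputable def chi (A : Set (ℕ × ℕ)) : (ℕ × ℕ) → Bool :=
  fun p => if p ∈ A then true else false

def vertRank : Symb 2 → ℕ
  | Sum.inl _ => 0
  | Sum.inr i => (i : ℕ) + 1

/-- The 2-type `x₁ = x₂ < y₁ < y₂` of pairs lying in one vertical column. -/
def vertType (u v : Symb 2) : Prop := vertRank u ≤ vertRank v

section Aux

open Classical in
/-- rank function for an n-type -/
lemma rank_exists {n : ℕ} {τ : Symb n → Symb n → Prop} (ht : IsNType n τ) :
    ∃ r : Symb n → ℕ, ∀ u v, τ u v ↔ r u ≤ r v := by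
  classical
  set r : Symb n → ℕ := fun u => (Finset.univ.filter fun w => τ w u ∧ ¬ τ u w).card with hr
  refine ⟨r, fun u v => ?_⟩
  have hmono : ∀ u v, τ u v → r u ≤ r v := by
    intro u v huv
    apply Finset.card_le_card
    intro w hw
    simp only [Finset.mem_filter, Finset.mem_univ, true_and] at hw ⊢
    exact ⟨ht.trans _ _ _ hw.1 huv, fun hvw => hw.2 (ht.trans _ _ _ huv hvw)⟩
  have hstrict : ∀ u v, τ u v → ¬ τ v u → r u < r v := by
    intro u v huv hvu
    apply Finset.card_lt_card
    constructor
    · intro w hw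
      simp only [Finset.mem_filter, Finset.mem_univ, true_and] at hw ⊢
      exact ⟨ht.trans _ _ _ hw.1 huv, fun hvw => hw.2 (ht.trans _ _ _ huv hvw)⟩
    · intro hsub
      have := hsub (by simp only [Finset.mem_filter, Finset.mem_univ, true_and]
                       exact ⟨huv, hvu⟩)
      simp only [Finset.mem_filter, Finset.mem_univ, true_and] at this
      exact this.2 (ht.refl u)
  constructor
  · intro huv; exact hmono _ _ huv
  · intro hle
    by_contra huv
    rcases ht.total u v with h | h
    · exact huv h
    · exact absurd hle (Nat.not_le.2 (hstrict _ _ h huv))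

/-- Generic greedy recursion. -/
noncomputable def buildV (g : ℕ → (ℕ → ℕ) → ℕ) : ℕ → ℕ
  | k => g k (fun m => if _ : m < k then buildV g m else 0)
termination_by k => k

/-- The greedy choice function. -/
noncomputable def gfun (H : Set (ℕ × ℕ)) (C : Set ℕ) (d : ℕ → Option ℕ) :
    ℕ → (ℕ → ℕ) → ℕ := fun k prev =>
  sInf {x | (match d k with
             | some k' => (prev k', x) ∈ H
             | none => x ∈ C) ∧ ∀ m, m < k → prev m < x}

lemma buildV_main (H : Set (ℕ × ℕ)) (C : Set ℕ) (hC : C.Infinite)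
    (hcol : ∀ m ∈ C, {y : ℕ | (m, y) ∈ H}.Infinite)
    (d : ℕ → Option ℕ) (hd : ∀ k k', d k = some k' → k' < k ∧ d k' = none) :
    ∀ k, (match d k with
          | some k' => (buildV (gfun H C d) k', buildV (gfun H C d) k) ∈ H
          | none => buildV (gfun H C d) k ∈ C) ∧
        ∀ m, m < k → buildV (gfun H C d) m < buildV (gfun H C d) k := by
  intro k
  induction k using Nat.strong_induction_on with
  | _ k IH =>
    set v := buildV (gfun H C d) with hv
    have hunf : v k = sInf {x | (match d k with
             | some k' => ((fun m => if _ : m < k then v m else 0) k', x) ∈ H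
             | none => x ∈ C) ∧ ∀ m, m < k → (if _ : m < k then v m else 0) < x} := by
      rw [hv, buildV]; rfl
    cases hdk : d k with
    | none =>
      have hset : {x | (match d k with
             | some k' => ((fun m => if _ : m < k then v m else 0) k', x) ∈ H
             | none => x ∈ C) ∧ ∀ m, m < k → (if _ : m < k then v m else 0) < x}
          = {x | x ∈ C ∧ ∀ m, m < k → v m < x} := by
        ext x
        simp only [Set.mem_setOf_eq, hdk]
        constructor
        · rintro ⟨h1, h2⟩
          exact ⟨h1, fun m hm => by simpa [dif_pos hm] using h2 m hm⟩
        · rintro ⟨h1, h2⟩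
          refine ⟨h1, fun m hm => ?_⟩
          rw [dif_pos hm]; exact h2 m hm
      have hne : {x | x ∈ C ∧ ∀ m, m < k → v m < x}.Nonempty := by
        obtain ⟨x, hx, hgt⟩ := hC.exists_gt ((Finset.range k).sup v)
        exact ⟨x, hx, fun m hm =>
          lt_of_le_of_lt (Finset.le_sup (Finset.mem_range.2 hm)) hgt⟩
      have hmem : v k ∈ {x | x ∈ C ∧ ∀ m, m < k → v m < x} := by
        rw [hunf, hset]
        exact Nat.sInf_mem hne
      simp only [hdk]
      exact hmem
    | some k' =>
      obtain ⟨hk'lt, hdk'⟩ := hd k k' hdk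
      have hvk'C : v k' ∈ C := by
        have h1 := (IH k' hk'lt).1
        rw [hdk'] at h1
        exact h1
      have hset : {x | (match d k with
             | some k' => ((fun m => if _ : m < k then v m else 0) k', x) ∈ H
             | none => x ∈ C) ∧ ∀ m, m < k → (if _ : m < k then v m else 0) < x}
          = {x | (v k', x) ∈ H ∧ ∀ m, m < k → v m < x} := by
        ext x
        simp only [Set.mem_setOf_eq, hdk, dif_pos hk'lt]
        constructor
        · rintro ⟨h1, h2⟩
          exact ⟨h1, fun m hm => by simpa [dif_pos hm] using h2 m hm⟩
        · rintro ⟨h1, h2⟩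
          refine ⟨h1, fun m hm => ?_⟩
          rw [dif_pos hm]; exact h2 m hm
      have hne : {x | (v k', x) ∈ H ∧ ∀ m, m < k → v m < x}.Nonempty := by
        obtain ⟨x, hx, hgt⟩ := (hcol _ hvk'C).exists_gt ((Finset.range k).sup v)
        exact ⟨x, hx, fun m hm =>
          lt_of_le_of_lt (Finset.le_sup (Finset.mem_range.2 hm)) hgt⟩
      have hmem : v k ∈ {x | (v k', x) ∈ H ∧ ∀ m, m < k → v m < x} := by
        rw [hunf, hset]
        exact Nat.sInf_mem hne
      simp only [hdk]
      exact hmem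


lemma rich {n : ℕ} {τ : Symb n → Symb n → Prop} (ht : IsNType n τ)
    (H : Set (ℕ × ℕ)) (hC : {m : ℕ | {y : ℕ | (m, y) ∈ H}.Infinite}.Infinite) :
    ∃ s : Set (ℕ × ℕ), s ⊆ H ∧ s.Finite ∧ s.ncard = n ∧ Realizes τ s := by
  classical
  obtain ⟨r, hr⟩ := rank_exists ht
  have hxy : ∀ i, r (Sum.inl i) < r (Sum.inr i) := by
    intro i
    rcases ht.x_lt_y i with ⟨h1, h2⟩
    exact lt_of_le_not_ge ((hr _ _).1 h1) (fun h => h2 ((hr _ _).2 h))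
  have hyy : ∀ i j : Fin n, i < j → r (Sum.inr i) < r (Sum.inr j) := by
    intro i j hij
    rcases ht.y_lt i j hij with ⟨h1, h2⟩
    exact lt_of_le_not_ge ((hr _ _).1 h1) (fun h => h2 ((hr _ _).2 h))
  have hyinj : ∀ i j : Fin n, r (Sum.inr i) = r (Sum.inr j) → i = j := by
    intro i j hij
    rcases lt_trichotomy i j with h | h | h
    · exact absurd hij (Nat.ne_of_lt (hyy i j h))
    · exact h
    · exact absurd hij.symm (Nat.ne_of_lt (hyy j i h))
  have hxryr : ∀ i j : Fin n, r (Sum.inl i) ≠ r (Sum.inr j) := by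
    intro i j heq
    have h1 : τ (Sum.inl i) (Sum.inr j) := (hr _ _).2 (le_of_eq heq)
    have h2 : τ (Sum.inr j) (Sum.inl i) := (hr _ _).2 (le_of_eq heq.symm)
    obtain ⟨-, j', hj'⟩ := ht.equiv_xx (Sum.inl i) (Sum.inr j) (by simp) h1 h2
    exact nomatch hj'
  set C := {m : ℕ | {y : ℕ | (m, y) ∈ H}.Infinite} with hCdef
  set d : ℕ → Option ℕ := fun k =>
    if h : ∃ i : Fin n, r (Sum.inr i) = k then some (r (Sum.inl h.choose)) else none with hd
  have hdnone : ∀ i : Fin n, d (r (Sum.inl i)) = none := by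
    intro i
    refine dif_neg ?_
    rintro ⟨j, hj⟩
    exact hxryr i j hj.symm
  have hdspec : ∀ k k', d k = some k' → k' < k ∧ d k' = none := by
    intro k k' h
    simp only [hd] at h
    split at h
    case isTrue hex =>
      injection h with h'
      subst h'
      refine ⟨?_, hdnone _⟩
      calc r (Sum.inl hex.choose) < r (Sum.inr hex.choose) := hxy _
        _ = k := hex.choose_spec
    case isFalse => exact nomatch h
  have hdy : ∀ i : Fin n, d (r (Sum.inr i)) = some (r (Sum.inl i)) := by
    intro i
    have hex : ∃ j : Fin n, r (Sum.inr j) = r (Sum.inr i) := ⟨i, rfl⟩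
    simp only [hd, dif_pos hex]
    have : hex.choose = i := hyinj _ _ hex.choose_spec
    rw [this]
  have hcol : ∀ m ∈ C, {y : ℕ | (m, y) ∈ H}.Infinite := fun m hm => hm
  have main := buildV_main H C hC hcol d hdspec
  set v := buildV (gfun H C d) with hv
  have vmono : StrictMono v := fun m k hmk => (main k).2 m hmk
  set a : Fin n → ℕ := fun i => v (r (Sum.inl i)) with ha
  set b : Fin n → ℕ := fun i => v (r (Sum.inr i)) with hb
  have hpairs : ∀ i : Fin n, (a i, b i) ∈ H := by
    intro i
    have h1 := (main (r (Sum.inr i))).1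
    rw [hdy i] at h1
    exact h1
  have hbmono : StrictMono b := fun i j hij => vmono (hyy i j hij)
  refine ⟨Set.range (fun i => (a i, b i)), ?_, Set.finite_range _, ?_, ?_⟩
  · rintro p ⟨i, rfl⟩; exact hpairs i
  · have hinj : Function.Injective (fun i : Fin n => (a i, b i)) := by
      intro i j hij
      exact hbmono.injective (congrArg Prod.snd hij)
    rw [← Set.image_univ, Set.ncard_image_of_injective _ hinj, Set.ncard_univ,
      Nat.card_eq_fintype_card, Fintype.card_fin]
  · refine ⟨a, b, hbmono, rfl, fun u w => ?_⟩
    have hval : ∀ u : Symb n, symVal a b u = v (r u) := by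
      rintro (i | i) <;> rfl
    rw [hval, hval, hr]
    exact vmono.le_iff_le.symm
lemma columns_infinite {W : Ultrafilter (ℕ × ℕ)} (hstd : StdNonPpoint W)
    {H : Set (ℕ × ℕ)} (hH : H ∈ W) :
    {m : ℕ | {y : ℕ | (m, y) ∈ H}.Infinite}.Infinite := by
  by_contra hfin
  rw [Set.not_infinite] at hfin
  set C := {m : ℕ | {y : ℕ | (m, y) ∈ H}.Infinite} with hCdef
  have hcolnW : ∀ m : ℕ, {p : ℕ × ℕ | p.1 = m} ∉ W := by
    intro m hm
    exact (hstd.2 _ hm).2 ⟨m, fun p hp => hp⟩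
  have hCnotW : {p : ℕ × ℕ | p.1 ∈ C} ∉ W := by
    have heq : {p : ℕ × ℕ | p.1 ∈ C} = ⋃ m ∈ C, {p : ℕ × ℕ | p.1 = m} := by
      ext p; simp
    rw [heq]
    intro hmem
    obtain ⟨m, -, hm⟩ := (Ultrafilter.finite_biUnion_mem_iff hfin).1 hmem
    exact hcolnW m hm
  have hA : H ∩ {p : ℕ × ℕ | p.1 ∉ C} ∈ W :=
    Filter.inter_mem hH ((Ultrafilter.compl_mem_iff_notMem).2 hCnotW)
  refine (hstd.2 _ hA).1 ?_
  intro m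
  by_cases hm : m ∈ C
  · have : {p : ℕ × ℕ | p ∈ H ∩ {p : ℕ × ℕ | p.1 ∉ C} ∧ p.1 = m} = ∅ := by
      ext p
      simp only [Set.mem_inter_iff, Set.mem_setOf_eq, Set.mem_empty_iff_false, iff_false]
      rintro ⟨⟨-, hp⟩, rfl⟩
      exact hp hm
    rw [this]; exact Set.finite_empty
  · have hcolfin : {y : ℕ | (m, y) ∈ H}.Finite := Set.not_infinite.1 hm
    apply Set.Finite.subset (hcolfin.image (fun y => (m, y)))
    rintro ⟨p1, p2⟩ ⟨⟨hp, -⟩, rfl⟩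
    exact ⟨p2, hp, rfl⟩

lemma realizes_unique {n : ℕ} {τ τ' : Symb n → Symb n → Prop} {s : Set (ℕ × ℕ)}
    (h : Realizes τ s) (h' : Realizes τ' s) : τ = τ' := by
  obtain ⟨a, b, hb, hs, hiff⟩ := h
  obtain ⟨a', b', hb', hs', hiff'⟩ := h'
  have hrange : Set.range b = Set.range b' := by
    have h1 : Set.range b = Prod.snd '' s := by
      rw [hs, ← Set.range_comp]; rfl
    have h2 : Set.range b' = Prod.snd '' s := by
      rw [hs', ← Set.range_comp]; rfl
    rw [h1, h2]
  haveI : WellFoundedLT (Fin n) := inferInstance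
  have hbb : b = b' := (StrictMono.range_inj hb hb').1 hrange
  subst hbb
  have haa : a = a' := by
    funext i
    have : (a' i, b i) ∈ s := by rw [hs']; exact ⟨i, rfl⟩
    rw [hs] at this
    obtain ⟨j, hj⟩ := this
    have hji : j = i := hb.injective (congrArg Prod.snd hj)
    subst hji
    simpa using congrArg Prod.fst hj
  subst haa
  funext u v
  exact propext ((hiff u v).trans (hiff' u v).symm)
end Aux
/-- an (n,T(n))-weakly Ramsey non-P-point in standard position contains a
set all of whose n-element subsets realize n-types. -/
theorem stmt3 (n : ℕ) (W : Ultrafilter (ℕ × ℕ)) (hstd : StdNonPpoint W)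
    (hwr : WeaklyRamsey W n (T n)) :
    ∃ P ∈ W, ∀ s : Set (ℕ × ℕ), s ⊆ P → s.Finite → s.ncard = n →
      ∃ τ : Symb n → Symb n → Prop, IsNType n τ ∧ Realizes τ s := by
  classical
  haveI : Fintype {τ : Symb n → Symb n → Prop // IsNType n τ} := Fintype.ofFinite _
  have hcard : Fintype.card {τ : Symb n → Symb n → Prop // IsNType n τ} = T n := by
    rw [T, Nat.card_eq_fintype_card]
  set E := Fintype.equivFin {τ : Symb n → Symb n → Prop // IsNType n τ} with hE
  set F : {τ : Symb n → Symb n → Prop // IsNType n τ} → Fin (T n) :=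
    fun σ => finCongr hcard (E σ) with hF
  have hFinj : Function.Injective F :=
    (finCongr hcard).injective.comp E.injective
  set c : Set (ℕ × ℕ) → Fin (T n + 1) := fun s =>
    if h : ∃ τ : Symb n → Symb n → Prop, IsNType n τ ∧ Realizes τ s then
      Fin.castSucc (F ⟨h.choose, h.choose_spec.1⟩)
    else Fin.last (T n) with hc
  obtain ⟨H, hH, hcount⟩ := hwr (T n + 1) c
  refine ⟨H, hH, ?_⟩
  by_contra hbad
  push_neg at hbad
  obtain ⟨s₀, hs₀H, hs₀fin, hs₀card, hs₀bad⟩ := hbad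
  set S := {i : Fin (T n + 1) | ∃ s : Set (ℕ × ℕ),
    s ⊆ H ∧ s.Finite ∧ s.ncard = n ∧ c s = i} with hS
  have hgood : ∀ σ : {τ : Symb n → Symb n → Prop // IsNType n τ},
      Fin.castSucc (F σ) ∈ S := by
    intro σ
    obtain ⟨s, hsH, hsfin, hscard, hsreal⟩ := rich σ.2 H (columns_infinite hstd hH)
    refine ⟨s, hsH, hsfin, hscard, ?_⟩
    have hex : ∃ τ : Symb n → Symb n → Prop, IsNType n τ ∧ Realizes τ s :=
      ⟨σ.1, σ.2, hsreal⟩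
    simp only [hc]
    rw [dif_pos hex]
    congr 1
    congr 1
    exact Subtype.ext (realizes_unique hex.choose_spec.2 hsreal)
  have hlast : Fin.last (T n) ∈ S := by
    refine ⟨s₀, hs₀H, hs₀fin, hs₀card, ?_⟩
    simp only [hc]
    rw [dif_neg]
    rintro ⟨τ, hτ, hreal⟩
    exact hs₀bad τ hτ hreal
  have hsub : insert (Fin.last (T n))
      (Set.range (fun σ => Fin.castSucc (F σ))) ⊆ S := by
    rintro i (rfl | ⟨σ, rfl⟩)
    · exact hlast
    · exact hgood σ
  have hrange_card : (Set.range (fun σ => Fin.castSucc (F σ))).ncard = T n := by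
    rw [← Set.image_univ,
      Set.ncard_image_of_injective _ (fun σ σ' h => hFinj (Fin.castSucc_injective _ h)),
      Set.ncard_univ]
    rw [T, Nat.card_eq_fintype_card]
  have hlast_notin : Fin.last (T n) ∉
      Set.range (fun σ => Fin.castSucc (F σ)) := by
    rintro ⟨σ, hσ⟩
    exact absurd hσ (Fin.castSucc_lt_last _).ne
  have hcard_ins : (insert (Fin.last (T n))
      (Set.range (fun σ => Fin.castSucc (F σ)))).ncard = T n + 1 := by
    rw [Set.ncard_insert_of_notMem hlast_notin (Set.finite_range _), hrange_card]
  have hle := Set.ncard_le_ncard hsub (Set.toFinite S)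
  rw [hcard_ins] at hle
  omega
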